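/- If there exists a Q-fold acyclic induced subgraph cover of G consisting of M subsets, and a valid scalar linear index code of length ℓ for G, then there exists a vector linear index code for G with message length M, broadcast rate ℓ, and locality at most (Q + (M−Q)ℓ)/M; hence β_G*((Q + (M−Q)ℓ)/M) ≤ ℓ. -/

import Mathlib

open Finset

/-- A unicast index coding problem on `N` receivers: receiver `i` demands message `i`
and knows messages indexed by `K i` as side information, with `i ∉ K i`. -/
structure IndexProblem (N : ℕ) where
  K : Fin N → Finset (Fin N)
  not_self : ∀ i, i ∉ K i

/-- A valid index code over alphabet `A` with message length `m` and codeword length `ℓ`: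
an encoder together with query sets `R i`, such that receiver `i` can decode `x i`
exactly from the queried codeword symbols `c_{R i}` and its side information. -/
structure IndexCode (N : ℕ) (G : IndexProblem N) (A : Type*) (m ℓ : ℕ) where
  enc : (Fin N → Fin m → A) → Fin ℓ → A
  R : Fin N → Finset (Fin ℓ)
  valid : ∀ (i : Fin N) (x y : Fin N → Fin m → A),
    (∀ t ∈ R i, enc x t = enc y t) → (∀ j ∈ G.K i, x j = y j) → x i = y i

/-- The optimal broadcast rate function `β_G^*(r)`: the infimum of broadcast rates `ℓ/m`
over all message lengths `m ≥ 1` and valid index codes with locality at most `r`. -/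
noncomputable def betaStar (A : Type*) {N : ℕ} (G : IndexProblem N) (r : ℝ) : ℝ :=
  sInf {β : ℝ | ∃ (m ℓ : ℕ) (_ : 0 < m) (C : IndexCode N G A m ℓ),
    (∀ i, ((C.R i).card : ℝ) ≤ r * m) ∧ β = (ℓ : ℝ) / m}

/-- A matrix `A` fits the side information graph `G` if its diagonal entries are `1`
and `A j i = 0` for all `i ≠ j` with `j ∉ K i`. -/
def Fits {N : ℕ} {F : Type*} [Field F] (G : IndexProblem N)
    (A : Matrix (Fin N) (Fin N) F) : Prop :=
  (∀ i, A i i = 1) ∧ ∀ i j, j ≠ i → j ∉ G.K i → A j i = 0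

/-- `B` is a valid scalar linear encoding matrix for `G`: every receiver `i` can recover
`x i` from the codeword `c = x B` and its side information `(x j, j ∈ K i)`. -/
def IsValidEncMatrix {N ℓ : ℕ} {F : Type*} [Field F] (G : IndexProblem N)
    (B : Matrix (Fin N) (Fin ℓ) F) : Prop :=
  ∀ (i : Fin N) (x y : Fin N → F),
    Matrix.vecMul x B = Matrix.vecMul y B → (∀ j ∈ G.K i, x j = y j) → x i = y i

/-- The column space of a matrix, i.e. the span of its columns. -/
def colSpace {n ℓ : ℕ} {F : Type*} [Field F] (B : Matrix (Fin n) (Fin ℓ) F) :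
    Submodule F (Fin n → F) :=
  Submodule.span F (Set.range B.transpose)

/-- There is a (nonempty) closed directed walk inside the vertex set `S`, where the edges of
the side information graph are `(i, j)` with `j ∈ K i`.  Its absence is equivalent to the
induced subgraph `G_S` being a directed acyclic graph. -/
def HasDirCycleIn {N : ℕ} (K : Fin N → Finset (Fin N)) (S : Finset (Fin N)) : Prop :=
  ∃ (n : ℕ) (v : ℕ → Fin N), 0 < n ∧ (∀ k ≤ n, v k ∈ S) ∧
    (∀ k < n, v (k + 1) ∈ K (v k)) ∧ v n = v 0

lemma exists_good_a {N ℓ : ℕ} {F : Type*} [Field F] (G : IndexProblem N)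
    (B : Matrix (Fin N) (Fin ℓ) F) (hB : IsValidEncMatrix G B) (i : Fin N) :
    ∃ s : Fin N → F, (∀ j, j ∉ G.K i → s j = 0) ∧
      (Pi.single i 1 - s) ∈ Submodule.span F (Set.range B.transpose) := by
  classical
  set W := Submodule.span F (Set.range B.transpose) with hWdef
  set V := Submodule.span F {v : Fin N → F | ∃ j ∈ G.K i, v = Pi.single j 1} with hVdef
  have hmem : (Pi.single i 1 : Fin N → F) ∈ W ⊔ V := by
    by_contra hmem
    have hne : (W ⊔ V).mkQ (Pi.single i 1) ≠ 0 := by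
      rw [Submodule.mkQ_apply, Ne, Submodule.Quotient.mk_eq_zero]; exact hmem
    have hnall : ¬ ∀ φ : Module.Dual F ((Fin N → F) ⧸ (W ⊔ V)),
        φ ((W ⊔ V).mkQ (Pi.single i 1)) = 0 := by
      rw [Module.forall_dual_apply_eq_zero_iff]; exact hne
    push_neg at hnall
    obtain ⟨g, hg⟩ := hnall
    set f : (Fin N → F) →ₗ[F] F := g.comp (W ⊔ V).mkQ with hfdef
    have hf0 : ∀ w ∈ W ⊔ V, f w = 0 := by
      intro w hw
      have : (W ⊔ V).mkQ w = 0 := (Submodule.Quotient.mk_eq_zero _).2 hw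
      simp [hfdef, this]
    set z : Fin N → F := fun n => f (Pi.single n 1) with hzdef
    have hexp : ∀ w : Fin N → F, f w = ∑ n, w n * z n := by
      intro w
      rw [LinearMap.pi_apply_eq_sum_univ f w]
      refine Finset.sum_congr rfl fun n _ => ?_
      have h1 : (fun j => if n = j then (1 : F) else 0) = Pi.single n 1 := by
        funext j'; simp [Pi.single_apply, eq_comm]
      rw [smul_eq_mul, h1]
    have hz0 : Matrix.vecMul z B = Matrix.vecMul (0 : Fin N → F) B := by
      funext t
      have h1 : Matrix.vecMul z B t = f (B.transpose t) := by
        rw [hexp]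
        simp [Matrix.vecMul, dotProduct, Matrix.transpose_apply, mul_comm]
      have h2 : f (B.transpose t) = 0 :=
        hf0 _ (le_sup_left (a := W) (b := V) (Submodule.subset_span ⟨t, rfl⟩))
      rw [h1, h2]
      simp [Matrix.zero_vecMul]
    have hside : ∀ j ∈ G.K i, z j = (0 : Fin N → F) j := by
      intro j hj
      have : (Pi.single j 1 : Fin N → F) ∈ W ⊔ V :=
        le_sup_right (a := W) (b := V) (Submodule.subset_span ⟨j, hj, rfl⟩)
      simpa [hzdef] using hf0 _ this
    have hzi := hB i z 0 hz0 hside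
    simp only [hzdef, Pi.zero_apply] at hzi
    exact hg hzi
  rw [Submodule.mem_sup] at hmem
  obtain ⟨b, hb, s, hs, hbs⟩ := hmem
  refine ⟨s, ?_, ?_⟩
  · intro j hj
    have hVk : V ≤ LinearMap.ker (LinearMap.proj j : (Fin N → F) →ₗ[F] F) := by
      rw [hVdef, Submodule.span_le]
      rintro v ⟨j', hj', rfl⟩
      have hne : j ≠ j' := fun h => hj (h ▸ hj')
      simp [LinearMap.mem_ker, Pi.single_eq_of_ne hne]
    exact hVk hs
  · have : Pi.single i 1 - s = b := by rw [← hbs]; abel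
    rw [this]; exact hb
lemma indep_of_acyclic {N : ℕ} {F : Type*} [Field F]
    (K : Fin N → Finset (Fin N))
    (a : Fin N → Fin N → F)
    (ha1 : ∀ i, a i i = 1)
    (ha0 : ∀ i j, j ≠ i → j ∉ K i → a i j = 0)
    (S : Finset (Fin N)) (hac : ¬ HasDirCycleIn K S) :
    LinearIndependent F (fun i : {x // x ∈ S} => a ↑i) := by
  classical
  rw [Fintype.linearIndependent_iff]
  intro g hsum
  by_contra hg
  push_neg at hg
  obtain ⟨i₀, hi₀⟩ := hg
  set T : Finset {x // x ∈ S} := Finset.univ.filter (fun i => g i ≠ 0) with hT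
  have hstep : ∀ i ∈ T, ∃ i' ∈ T, (i : Fin N) ∈ K (i' : Fin N) := by
    intro i hi
    by_contra hno
    push_neg at hno
    have h0 : ∑ i', g i' * a (↑i') (↑i) = 0 := by
      have h := congrFun hsum (↑i : Fin N)
      simpa [Finset.sum_apply] using h
    have hterm : ∀ i' ∈ (univ : Finset {x // x ∈ S}), i' ≠ i → g i' * a ↑i' ↑i = 0 := by
      intro i' _ hne
      by_cases hgi' : g i' = 0
      · rw [hgi', zero_mul]
      · have hi'T : i' ∈ T := by simp [hT, hgi']
        have h1 : (i : Fin N) ∉ K ↑i' := hno i' hi'T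
        have h2 : (i : Fin N) ≠ ↑i' := fun h => hne (Subtype.ext h.symm)
        rw [ha0 _ _ h2 h1, mul_zero]
    have hsingle := Finset.sum_eq_single i hterm (fun h => absurd (Finset.mem_univ i) h)
    rw [hsingle, ha1, mul_one] at h0
    exact (Finset.mem_filter.1 hi).2 h0
  have hi₀T : i₀ ∈ T := by simp [hT, hi₀]
  have hnxt : ∀ p : {x : {x // x ∈ S} // x ∈ T},
      ∃ q : {x : {x // x ∈ S} // x ∈ T}, ((p : {x // x ∈ S}) : Fin N) ∈ K ↑↑q := by
    rintro ⟨i, hi⟩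
    obtain ⟨i', hi', hK'⟩ := hstep i hi
    exact ⟨⟨i', hi'⟩, hK'⟩
  choose nxt hnxtK using hnxt
  set w : ℕ → {x : {x // x ∈ S} // x ∈ T} := fun k => nxt^[k] ⟨i₀, hi₀T⟩ with hw
  have hwsucc : ∀ k, w (k + 1) = nxt (w k) := by
    intro k
    simp only [hw, Function.iterate_succ_apply']
  have hwstep : ∀ k, ((w k : {x // x ∈ S}) : Fin N) ∈ K ↑↑(w (k + 1)) := by
    intro k
    rw [hwsucc k]
    exact hnxtK (w k)
  have key : ∀ p q : ℕ, p < q → w p = w q → False := by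
    intro p q hlt heq
    apply hac
    refine ⟨q - p, fun k => ↑↑(w (q - k)), Nat.sub_pos_of_lt hlt, ?_, ?_, ?_⟩
    · intro k _
      exact (w (q - k)).1.2
    · intro k hk
      have h1 : q - (k + 1) + 1 = q - k := by omega
      have h2 := hwstep (q - (k + 1))
      rw [h1] at h2
      exact h2
    · show ((w (q - (q - p)) : {x // x ∈ S}) : Fin N) = ↑↑(w (q - 0))
      have h3 : q - (q - p) = p := by omega
      rw [h3, Nat.sub_zero, heq]
  obtain ⟨p, q, hpq, hwe⟩ := Finite.exists_ne_map_eq_of_infinite w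
  rcases lt_or_gt_of_ne hpq with h | h
  · exact key p q h hwe
  · exact key q p h hwe.symm

lemma exists_block {N ℓ : ℕ} {F : Type*} [Field F] (hl : 0 < ℓ)
    (K : Fin N → Finset (Fin N))
    (a : Fin N → Fin N → F)
    (L : (Fin ℓ → F) →ₗ[F] (Fin N → F))
    (haL : ∀ i, a i ∈ LinearMap.range L)
    (ha1 : ∀ i, a i i = 1)
    (ha0 : ∀ i j, j ≠ i → j ∉ K i → a i j = 0)
    (S : Finset (Fin N)) (hac : ¬ HasDirCycleIn K S) :
    ∃ (col : Fin ℓ → (Fin N → F)) (tp : Fin N → Fin ℓ),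
      (∀ i ∈ S, col (tp i) = a i) ∧ (∀ i, a i ∈ Submodule.span F (Set.range col)) := by
  classical
  have hli := indep_of_acyclic K a ha1 ha0 S hac
  have hsli : LinearIndepOn F id (Set.range (fun i : {x // x ∈ S} => a ↑i)) :=
    (linearIndepOn_id_range_iff hli.injective).2 hli
  set sSet : Set (Fin N → F) := Set.range (fun i : {x // x ∈ S} => a ↑i) with hsSet
  have hst : sSet ⊆ sSet ∪ Set.range a := Set.subset_union_left
  set b : Set (Fin N → F) := hsli.extend hst with hbdef
  have hsb : sSet ⊆ b := hsli.subset_extend hst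
  have hbt : b ⊆ sSet ∪ Set.range a := hsli.extend_subset hst
  have hspan : sSet ∪ Set.range a ⊆ ↑(Submodule.span F b) := hsli.subset_span_extend hst
  have hbli : LinearIndependent F ((↑) : b → (Fin N → F)) := hsli.linearIndepOn_extend hst
  have hbr : b ⊆ Set.range a := by
    intro x hx
    rcases hbt hx with h | h
    · obtain ⟨i, rfl⟩ := h; exact ⟨↑i, rfl⟩
    · exact h
  have hbfin : b.Finite := (Set.finite_range a).subset hbr
  letI : Fintype b := hbfin.fintype
  have hbL : ∀ x : b, (x : Fin N → F) ∈ LinearMap.range L := by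
    intro x
    obtain ⟨i, hi⟩ := hbr x.2
    rw [← hi]; exact haL i
  choose pre hpre using hbL
  have hcomp : (⇑L ∘ pre) = (Subtype.val : b → (Fin N → F)) := funext fun x => hpre x
  have hpli : LinearIndependent F pre := LinearIndependent.of_comp L (by rw [hcomp]; exact hbli)
  have hcard : Fintype.card b ≤ ℓ := by
    have h := hpli.fintype_card_le_finrank
    rwa [Module.finrank_fintype_fun_eq_card, Fintype.card_fin] at h
  obtain ⟨emb⟩ : Nonempty (b ↪ Fin ℓ) :=
    Function.Embedding.nonempty_of_card_le (by simpa using hcard)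
  set col : Fin ℓ → (Fin N → F) :=
    fun t => if h : ∃ x : b, emb x = t then ↑h.choose else 0 with hcol
  have hcolemb : ∀ x : b, col (emb x) = ↑x := by
    intro x
    have hex : ∃ y : b, emb y = emb x := ⟨x, rfl⟩
    rw [hcol]
    simp only
    rw [dif_pos hex]
    have h1 : hex.choose = x := emb.injective hex.choose_spec
    rw [h1]
  have hbcol : b ⊆ Set.range col := fun x hx => ⟨emb ⟨x, hx⟩, hcolemb ⟨x, hx⟩⟩
  refine ⟨col, fun i => if h : i ∈ S then emb ⟨a i, hsb ⟨⟨i, h⟩, rfl⟩⟩ else ⟨0, hl⟩, ?_, ?_⟩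
  · intro i hi
    simp only [dif_pos hi]
    exact hcolemb _
  · intro i
    have h1 : a i ∈ Submodule.span F b := hspan (Or.inr ⟨i, rfl⟩)
    exact Submodule.span_mono hbcol h1

lemma decode_step {N : ℕ} {F : Type*} [Field F] (Ki : Finset (Fin N)) (s : Fin N → F)
    (hs : ∀ j, j ∉ Ki → s j = 0) (i : Fin N) (hiK : i ∉ Ki)
    (x y : Fin N → F)
    (hz : ∑ n, x n * ((Pi.single i 1 - s : Fin N → F) n) = ∑ n, y n * ((Pi.single i 1 - s : Fin N → F) n))
    (hside : ∀ j ∈ Ki, x j = y j) : x i = y i := by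
  classical
  have key : ∀ u : Fin N → F,
      ∑ n, u n * ((Pi.single i 1 - s : Fin N → F) n) = u i - ∑ n, u n * s n := by
    intro u
    have h1 : ∀ n, u n * ((Pi.single i 1 - s : Fin N → F) n) = (if n = i then u n else 0) - u n * s n := by
      intro n
      by_cases h : n = i
      · subst h
        simp only [Pi.sub_apply, Pi.single_eq_same, eq_self_iff_true, if_true]
        ring
      · simp only [Pi.sub_apply, Pi.single_eq_of_ne h, if_neg h]
        ring
    rw [Finset.sum_congr rfl (fun n _ => h1 n), Finset.sum_sub_distrib]
    congr 1
    simp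
  rw [key, key] at hz
  have hss : ∑ n, x n * s n = ∑ n, y n * s n := by
    refine Finset.sum_congr rfl fun n _ => ?_
    by_cases h : n ∈ Ki
    · rw [hside n h]
    · rw [hs n h, mul_zero, mul_zero]
  rw [hss] at hz
  exact sub_left_inj.1 hz

theorem ais_cover_theorem {N M Q ℓ : ℕ} {F : Type*} [Field F]
    (G : IndexProblem N) (S : Fin M → Finset (Fin N))
    (hcover : ∀ i : Fin N, ∃ j, i ∈ S j)
    (hQ : ∀ i : Fin N, Q ≤ (Finset.univ.filter fun j => i ∈ S j).card)
    (hacyc : ∀ j, ¬ HasDirCycleIn G.K (S j))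
    (hB : ∃ B : Matrix (Fin N) (Fin ℓ) F, IsValidEncMatrix G B) :
    (∃ C : IndexCode N G F M (M * ℓ), ∀ i,
        ((C.R i).card : ℝ) ≤ (Q : ℝ) + ((M : ℝ) - Q) * ℓ) ∧
    betaStar F G (((Q : ℝ) + ((M : ℝ) - Q) * ℓ) / M) ≤ ℓ := by
  classical
  obtain ⟨B, hB⟩ := hB
  by_cases hN : N = 0
  · subst hN
    have hbdd : BddBelow {β : ℝ | ∃ (m ℓ' : ℕ) (_ : 0 < m) (C : IndexCode 0 G F m ℓ'),
        (∀ i, ((C.R i).card : ℝ) ≤ (((Q : ℝ) + ((M : ℝ) - Q) * ℓ) / M) * m) ∧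
        β = (ℓ' : ℝ) / m} := by
      refine ⟨0, fun β hβ => ?_⟩
      obtain ⟨m, l', hm, C', _, rfl⟩ := hβ
      positivity
    have hmem : (0 : ℝ) ∈ {β : ℝ | ∃ (m ℓ' : ℕ) (_ : 0 < m) (C : IndexCode 0 G F m ℓ'),
        (∀ i, ((C.R i).card : ℝ) ≤ (((Q : ℝ) + ((M : ℝ) - Q) * ℓ) / M) * m) ∧
        β = (ℓ' : ℝ) / m} := by
      refine ⟨1, 0, one_pos, ⟨fun _ c => c.elim0, fun i => i.elim0, fun i => i.elim0⟩,
        fun i => i.elim0, by norm_num⟩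
    constructor
    · exact ⟨⟨fun _ _ => 0, fun i => i.elim0, fun i => i.elim0⟩, fun i => i.elim0⟩
    · calc betaStar F G (((Q : ℝ) + ((M : ℝ) - Q) * ℓ) / M) ≤ 0 := csInf_le hbdd hmem
        _ ≤ (ℓ : ℝ) := by positivity
  · have hNpos : 0 < N := Nat.pos_of_ne_zero hN
    set i0 : Fin N := ⟨0, hNpos⟩ with hi0
    have hM : 0 < M := (hcover i0).choose.pos
    have hl : 0 < ℓ := by
      by_contra hl0
      push_neg at hl0
      have h0 : ℓ = 0 := Nat.le_zero.1 hl0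
      subst h0
      have hveceq : Matrix.vecMul (Pi.single i0 1) B = Matrix.vecMul (0 : Fin N → F) B := by
        funext t; exact t.elim0
      have hsi : ∀ j ∈ G.K i0, (Pi.single i0 1 : Fin N → F) j = (0 : Fin N → F) j := by
        intro j hj
        have hne : j ≠ i0 := fun h => G.not_self i0 (h ▸ hj)
        simp [Pi.single_eq_of_ne hne]
      have := hB i0 (Pi.single i0 1) 0 hveceq hsi
      rw [Pi.single_eq_same] at this
      exact one_ne_zero this
    -- the decoding vectors
    choose sfun hs0 hsW using fun i => exists_good_a G B hB i
    set a : Fin N → Fin N → F := fun i => Pi.single i 1 - sfun i with hadef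
    have haL : ∀ i, a i ∈ LinearMap.range (Matrix.vecMulLinear B.transpose) := by
      intro i
      rw [range_vecMulLinear]
      exact hsW i
    have ha1 : ∀ i, a i i = 1 := by
      intro i
      simp [hadef, Pi.single_eq_same, hs0 i i (G.not_self i)]
    have ha0 : ∀ i j', j' ≠ i → j' ∉ G.K i → a i j' = 0 := by
      intro i j' h1 h2
      simp [hadef, Pi.single_eq_of_ne h1, hs0 i j' h2]
    choose col tp hcoltp hspan using fun j =>
      exists_block hl G.K a (Matrix.vecMulLinear B.transpose) haL ha1 ha0 (S j) (hacyc j)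
    set E := (finProdFinEquiv : Fin M × Fin ℓ ≃ Fin (M * ℓ)) with hE
    set enc : (Fin N → Fin M → F) → Fin (M * ℓ) → F :=
      fun x c => ∑ n, x n (E.symm c).1 * col (E.symm c).1 (E.symm c).2 n with henc
    set Rset : Fin N → Finset (Fin (M * ℓ)) :=
      fun i => Finset.image E ((univ : Finset (Fin M)).biUnion fun j =>
        {j} ×ˢ (if i ∈ S j then {tp j i} else univ)) with hRset
    have hvalid : ∀ (i : Fin N) (x y : Fin N → Fin M → F),
        (∀ t ∈ Rset i, enc x t = enc y t) → (∀ j ∈ G.K i, x j = y j) → x i = y i := by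
      intro i x y hquery hside
      funext j
      have hz : ∑ n, x n j * a i n = ∑ n, y n j * a i n := by
        by_cases hij : i ∈ S j
        · have hmem : E (j, tp j i) ∈ Rset i := by
            rw [hRset]
            refine Finset.mem_image_of_mem _ (Finset.mem_biUnion.2 ⟨j, Finset.mem_univ _, ?_⟩)
            rw [if_pos hij]
            exact Finset.mem_product.2 ⟨Finset.mem_singleton_self _, Finset.mem_singleton_self _⟩
          have hq := hquery _ hmem
          simp only [henc, Equiv.symm_apply_apply] at hq
          rw [← hcoltp j i hij]
          exact hq
        · have hallq : ∀ t : Fin ℓ, ∑ n, x n j * col j t n = ∑ n, y n j * col j t n := by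
            intro t
            have hmem : E (j, t) ∈ Rset i := by
              rw [hRset]
              refine Finset.mem_image_of_mem _ (Finset.mem_biUnion.2 ⟨j, Finset.mem_univ _, ?_⟩)
              rw [if_neg hij]
              exact Finset.mem_product.2 ⟨Finset.mem_singleton_self _, Finset.mem_univ _⟩
            have hq := hquery _ hmem
            simp only [henc, Equiv.symm_apply_apply] at hq
            exact hq
          let φ : (Fin N → F) →ₗ[F] F :=
            { toFun := fun v => ∑ n, (x n j - y n j) * v n
              map_add' := fun v w => by
                simp only [Pi.add_apply, mul_add]
                rw [Finset.sum_add_distrib]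
              map_smul' := fun c v => by
                simp only [Pi.smul_apply, smul_eq_mul, RingHom.id_apply, Finset.mul_sum]
                exact Finset.sum_congr rfl fun n _ => by ring }
          have hker : Submodule.span F (Set.range (col j)) ≤ LinearMap.ker φ := by
            rw [Submodule.span_le]
            rintro v ⟨t, rfl⟩
            have hsplit : ∀ n, (x n j - y n j) * col j t n
                = x n j * col j t n - y n j * col j t n := fun n => by ring
            show φ (col j t) = 0
            show ∑ n, (x n j - y n j) * col j t n = 0
            rw [Finset.sum_congr rfl fun n _ => hsplit n, Finset.sum_sub_distrib,
              hallq t, sub_self]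
          have hφa : φ (a i) = 0 := hker (hspan j i)
          have hφa' : ∑ n, (x n j - y n j) * a i n = 0 := hφa
          have hsplit : ∀ n, (x n j - y n j) * a i n
              = x n j * a i n - y n j * a i n := fun n => by ring
          rw [Finset.sum_congr rfl fun n _ => hsplit n, Finset.sum_sub_distrib] at hφa'
          exact sub_eq_zero.1 hφa'
      have hz' : ∑ n, x n j * ((Pi.single i 1 - sfun i : Fin N → F) n)
          = ∑ n, y n j * ((Pi.single i 1 - sfun i : Fin N → F) n) := hz
      exact decode_step (G.K i) (sfun i) (hs0 i) i (G.not_self i)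
        (fun n => x n j) (fun n => y n j) hz' (fun j' hj' => congrFun (hside j' hj') j)
    -- cardinality of query sets
    have hcard : ∀ i : Fin N, (Rset i).card
        = (univ.filter fun j => i ∈ S j).card * 1
          + (univ.filter fun j => ¬ i ∈ S j).card * ℓ := by
      intro i
      rw [hRset]
      simp only
      rw [Finset.card_image_of_injective _ E.injective]
      rw [Finset.card_biUnion]
      · rw [← Finset.sum_filter_add_sum_filter_not univ (fun j => i ∈ S j)]
        congr 1
        · rw [Finset.sum_congr rfl (fun j hj => ?_), Finset.sum_const, smul_eq_mul]
          rw [if_pos (Finset.mem_filter.1 hj).2]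
          simp
        · rw [Finset.sum_congr rfl (fun j hj => ?_), Finset.sum_const, smul_eq_mul]
          rw [if_neg (Finset.mem_filter.1 hj).2]
          simp [Finset.card_product]
      · intro j1 _ j2 _ hne
        rw [Function.onFun, Finset.disjoint_left]
        rintro ⟨j', t⟩ h1 h2
        have e1 : j' = j1 := Finset.mem_singleton.1 (Finset.mem_product.1 h1).1
        have e2 : j' = j2 := Finset.mem_singleton.1 (Finset.mem_product.1 h2).1
        exact hne (e1 ▸ e2)
    have hloc : ∀ i : Fin N, ((Rset i).card : ℝ) ≤ (Q : ℝ) + ((M : ℝ) - Q) * ℓ := by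
      intro i
      rw [hcard i]
      have hk : Q ≤ (univ.filter fun j => i ∈ S j).card := hQ i
      have hkM : (univ.filter fun j => i ∈ S j).card
          + (univ.filter fun j => ¬ i ∈ S j).card = M := by
        rw [Finset.card_filter_add_card_filter_not, Finset.card_univ, Fintype.card_fin]
      set k := (univ.filter fun j => i ∈ S j).card
      set k' := (univ.filter fun j => ¬ i ∈ S j).card
      have hkR : (Q : ℝ) ≤ k := by exact_mod_cast hk
      have hkMR : (k : ℝ) + k' = M := by exact_mod_cast hkM
      have hlR : (1 : ℝ) ≤ ℓ := by exact_mod_cast hl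
      push_cast
      nlinarith [mul_nonneg (sub_nonneg.2 hkR) (sub_nonneg.2 hlR)]
    refine ⟨⟨⟨enc, Rset, hvalid⟩, hloc⟩, ?_⟩
    have hM0 : (M : ℝ) ≠ 0 := by exact_mod_cast hM.ne'
    apply csInf_le
    · refine ⟨0, fun β hβ => ?_⟩
      obtain ⟨m, l', hm, C', _, rfl⟩ := hβ
      positivity
    · refine ⟨M, M * ℓ, hM, ⟨enc, Rset, hvalid⟩, fun i => ?_, ?_⟩
      · rw [div_mul_cancel₀ _ hM0]
        exact hloc i
      · rw [Nat.cast_mul, mul_comm, mul_div_assoc, div_self hM0, mul_one]
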